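/- Let μ be a real number and let M, i be positive integers with 1 ≤ i ≤ M and M ≤ μ − 1. Then e^{−μ} μ^{M−i}/(M−i)! ≤ e^{−i/μ} · e^{−μ} μ^{M+i}/(M+i)!. In particular, the Poisson(μ) probability mass at M − i is at most the Poisson(μ) probability mass at M + i. -/
import Mathlib

lemma fact_pair_bound (M i : ℕ) (hiM : i ≤ M) :
    (M + i).factorial ≤ M ^ i * (M + 1) ^ i * (M - i).factorial := by
  induction i with
  | zero => simp
  | succ n ih =>
    have hn : n ≤ M := le_of_lt (lt_of_lt_of_le (Nat.lt_succ_self n) hiM)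
    have ih' := ih hn
    have hsub : M - n = (M - (n + 1)) + 1 := by omega
    have hfact : (M - n).factorial = (M - n) * (M - (n + 1)).factorial := by
      rw [hsub]; rw [Nat.factorial_succ]
    have hstep : (M + n + 1) * (M - n) ≤ M * (M + 1) := by
      obtain ⟨k, hk⟩ : ∃ k, M = n + 1 + k := ⟨M - n - 1, by omega⟩
      subst hk
      have : (n + 1 + k + n + 1) * (n + 1 + k - n) = (2 * n + k + 2) * (k + 1) := by
        congr 1 <;> omega
      rw [this]; nlinarith
    calc (M + (n + 1)).factorial = (M + n + 1) * (M + n).factorial := by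
          rw [show M + (n+1) = (M + n) + 1 by omega, Nat.factorial_succ]
      _ ≤ (M + n + 1) * (M ^ n * (M + 1) ^ n * (M - n).factorial) :=
          Nat.mul_le_mul_left _ ih'
      _ = M ^ n * (M + 1) ^ n * ((M + n + 1) * (M - n)) * (M - (n + 1)).factorial := by
          rw [hfact]; ring
      _ ≤ M ^ n * (M + 1) ^ n * (M * (M + 1)) * (M - (n + 1)).factorial := by
          exact Nat.mul_le_mul_right _ (Nat.mul_le_mul_left _ hstep)
      _ = M ^ (n + 1) * (M + 1) ^ (n + 1) * (M - (n + 1)).factorial := by ring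

theorem stmt6 (μ : ℝ) (M i : ℕ) (hi : 1 ≤ i) (hiM : i ≤ M) (hM : (M : ℝ) ≤ μ - 1) :
    Real.exp (-μ) * μ ^ (M - i) / (Nat.factorial (M - i) : ℝ) ≤
      Real.exp (-((i : ℝ) / μ)) *
        (Real.exp (-μ) * μ ^ (M + i) / (Nat.factorial (M + i) : ℝ)) := by
  have hM1 : (1 : ℝ) ≤ (M : ℝ) := by exact_mod_cast (hi.trans hiM)
  have hμ2 : (2 : ℝ) ≤ μ := by linarith
  have hμ0 : (0 : ℝ) < μ := by linarith
  -- (μ - 1) ≤ μ * exp (-1/μ)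
  have hexp1 : μ - 1 ≤ μ * Real.exp (-(1 / μ)) := by
    have h := Real.add_one_le_exp (-(1/μ))
    have : μ * (-(1/μ) + 1) ≤ μ * Real.exp (-(1/μ)) :=
      mul_le_mul_of_nonneg_left h hμ0.le
    calc μ - 1 = μ * (-(1/μ) + 1) := by field_simp; ring
      _ ≤ μ * Real.exp (-(1/μ)) := this
  have hpow : ((μ - 1) : ℝ) ^ i ≤ (μ * Real.exp (-(1/μ))) ^ i :=
    pow_le_pow_left₀ (by linarith) hexp1 i
  have hexpi : (Real.exp (-(1/μ))) ^ i = Real.exp (-((i : ℝ) / μ)) := by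
    rw [← Real.exp_nat_mul]; congr 1; field_simp
  -- key real inequality
  have key : ((M + i).factorial : ℝ) ≤
      Real.exp (-((i : ℝ) / μ)) * μ ^ (2 * i) * ((M - i).factorial : ℝ) := by
    have h1 : ((M + i).factorial : ℝ) ≤
        (M : ℝ) ^ i * ((M : ℝ) + 1) ^ i * ((M - i).factorial : ℝ) := by
      have := fact_pair_bound M i hiM
      exact_mod_cast this
    have h2 : (M : ℝ) ^ i ≤ (μ - 1) ^ i := pow_le_pow_left₀ (by linarith) hM i
    have h3 : ((M : ℝ) + 1) ^ i ≤ μ ^ i := pow_le_pow_left₀ (by positivity) (by linarith) i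
    have hf0 : (0 : ℝ) < ((M - i).factorial : ℝ) := by exact_mod_cast Nat.factorial_pos _
    have h4 : (M : ℝ) ^ i * ((M : ℝ) + 1) ^ i ≤ (μ - 1) ^ i * μ ^ i := by
      apply mul_le_mul h2 h3 (by positivity) (pow_nonneg (by linarith) i)
    have h5 : (μ - 1) ^ i * μ ^ i ≤ (μ * Real.exp (-(1/μ))) ^ i * μ ^ i := by
      apply mul_le_mul_of_nonneg_right hpow (by positivity)
    have h6 : (μ * Real.exp (-(1/μ))) ^ i * μ ^ i
        = Real.exp (-((i : ℝ) / μ)) * μ ^ (2 * i) := by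
      rw [mul_pow, hexpi, two_mul, pow_add]; ring
    calc ((M + i).factorial : ℝ)
        ≤ (M : ℝ) ^ i * ((M : ℝ) + 1) ^ i * ((M - i).factorial : ℝ) := h1
      _ ≤ ((μ - 1) ^ i * μ ^ i) * ((M - i).factorial : ℝ) :=
          mul_le_mul_of_nonneg_right h4 hf0.le
      _ ≤ ((μ * Real.exp (-(1/μ))) ^ i * μ ^ i) * ((M - i).factorial : ℝ) :=
          mul_le_mul_of_nonneg_right h5 hf0.le
      _ = Real.exp (-((i : ℝ) / μ)) * μ ^ (2 * i) * ((M - i).factorial : ℝ) := by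
          rw [h6]
  -- assemble
  have hC : (0 : ℝ) < ((M - i).factorial : ℝ) := by exact_mod_cast Nat.factorial_pos _
  have hF : (0 : ℝ) < ((M + i).factorial : ℝ) := by exact_mod_cast Nat.factorial_pos _
  have hD : μ ^ (M + i) = μ ^ (M - i) * μ ^ (2 * i) := by
    rw [← pow_add]; congr 1; omega
  rw [hD, mul_div_assoc']
  rw [div_le_div_iff₀ hC hF]
  have hA : (0 : ℝ) < Real.exp (-μ) := Real.exp_pos _
  have hB : (0 : ℝ) < μ ^ (M - i) := by positivity
  calc Real.exp (-μ) * μ ^ (M - i) * ((M + i).factorial : ℝ)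
      ≤ Real.exp (-μ) * μ ^ (M - i) *
        (Real.exp (-((i : ℝ) / μ)) * μ ^ (2 * i) * ((M - i).factorial : ℝ)) :=
        mul_le_mul_of_nonneg_left key (by positivity)
    _ = Real.exp (-((i : ℝ) / μ)) * (Real.exp (-μ) * (μ ^ (M - i) * μ ^ (2 * i))) *
        ((M - i).factorial : ℝ) := by ring
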